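/- arXiv:2604.17035 — 8 statements merged into one kernel-verified Lean document; each statement's English description precedes it below -/
import Mathlib

section
/- Let f : ℝ → ℝ be nonnegative and measurable, and suppose β ↦ f(β) exp(-β E') and β ↦ β f(β) exp(-β E') are integrable on [0,∞) for all E' in a neighborhood of E, with ρ(E) > 0. Then the conditional mean of the inverse temperature given energy E equals the fundamental inverse temperature: ∫₀^∞ β · (f(β) exp(-β E)/ρ(E)) dβ = -(d/dE) log ρ(E) = β_F(E). -/
open MeasureTheory Real

/-- The superstatistical ensemble function: the Laplace transform of the
weight function `f` over `[0, ∞)`. -/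
noncomputable def rho (f : ℝ → ℝ) (E : ℝ) : ℝ :=
  ∫ β in Set.Ici (0 : ℝ), f β * Real.exp (-β * E)

/-- The fundamental inverse temperature `β_F(E) = -(d/dE) log ρ(E)`. -/
noncomputable def betaF (f : ℝ → ℝ) (E : ℝ) : ℝ :=
  -deriv (fun E' => Real.log (rho f E')) E

/-- The conditional mean of the inverse temperature given the energy `E`
equals the fundamental inverse temperature `β_F(E) = -(d/dE) log ρ(E)`. -/
theorem conditional_mean_beta_eq_betaF
    (f : ℝ → ℝ) (hf_meas : Measurable f) (hf_nonneg : ∀ β, 0 ≤ f β) (E : ℝ)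
    (hint : ∃ U ∈ nhds E, ∀ E' ∈ U, ∀ k ≤ 1,
      IntegrableOn (fun β => β ^ k * f β * Real.exp (-β * E')) (Set.Ici (0 : ℝ)))
    (hpos : 0 < rho f E) :
    ∫ β in Set.Ici (0 : ℝ), β * (f β * Real.exp (-β * E) / rho f E) = betaF f E := by
  obtain ⟨U, hU, hI⟩ := hint
  obtain ⟨ε, hε, hball⟩ := Metric.mem_nhds_iff.1 hU
  set δ := ε / 2 with hδdef
  have hδ : 0 < δ := by positivity
  have hEδ : E - δ ∈ U := by
    apply hball
    simp only [Metric.mem_ball, Real.dist_eq]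
    rw [abs_of_nonpos (by linarith)]
    linarith
  set μ := volume.restrict (Set.Ici (0 : ℝ)) with hμ
  -- differentiation under the integral sign
  have key := hasDerivAt_integral_of_dominated_loc_of_deriv_le (μ := μ)
    (F := fun E' β => f β * Real.exp (-β * E'))
    (F' := fun E' β => -β * f β * Real.exp (-β * E'))
    (x₀ := E) (bound := fun β => β * f β * Real.exp (-β * (E - δ))) (Metric.ball_mem_nhds E hδ)
    ?_ ?_ ?_ ?_ ?_ ?_
  · obtain ⟨hF'int, hderiv⟩ := key
    have hρderiv : HasDerivAt (rho f)
        (∫ β, -β * f β * Real.exp (-β * E) ∂μ) E := hderiv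
    have hlog := (hρderiv.log hpos.ne').deriv
    have hI' : (∫ β, -β * f β * Real.exp (-β * E) ∂μ)
        = -(∫ β, β * f β * Real.exp (-β * E) ∂μ) := by
      rw [← integral_neg]; congr 1; ext β; ring
    rw [betaF, hlog, hI']
    have : ∫ β in Set.Ici (0 : ℝ), β * (f β * Real.exp (-β * E) / rho f E)
        = (∫ β in Set.Ici (0 : ℝ), β * f β * Real.exp (-β * E)) / rho f E := by
      rw [← integral_div]; congr 1; ext β; ring
    rw [this]
    field_simp
    rw [hμ]; congr 1; ext β; ring
  · filter_upwards with E'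
    exact (hf_meas.mul (by fun_prop)).aestronglyMeasurable
  · have h0 := hI E (hball (Metric.mem_ball_self hε)) 0 (by norm_num)
    simpa [pow_zero, one_mul] using h0.integrable
  · apply Measurable.aestronglyMeasurable
    exact (measurable_id.neg.mul hf_meas).mul
      (Real.measurable_exp.comp (measurable_id.neg.mul measurable_const))
  · rw [hμ]
    filter_upwards [ae_restrict_mem measurableSet_Ici] with β hβ E' hE'
    have hE'b : E - δ ≤ E' := by
      have := abs_lt.1 (by simpa [Real.dist_eq] using hE')
      linarith [this.1]
    have hexp : Real.exp (-β * E') ≤ Real.exp (-β * (E - δ)) := by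
      apply Real.exp_le_exp.2
      have : β * (E - δ) ≤ β * E' := mul_le_mul_of_nonneg_left hE'b hβ
      linarith
    have hβ0 : (0:ℝ) ≤ β := hβ
    have : ‖-β * f β * Real.exp (-β * E')‖ = β * f β * Real.exp (-β * E') := by
      rw [Real.norm_eq_abs, abs_mul, abs_mul, abs_neg, abs_of_nonneg hβ0,
        abs_of_nonneg (hf_nonneg β), abs_of_nonneg (Real.exp_pos _).le]
    rw [this]
    exact mul_le_mul_of_nonneg_left hexp (mul_nonneg hβ0 (hf_nonneg β))
  · have h1 := hI (E - δ) hEδ 1 le_rfl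
    simpa [pow_one] using h1.integrable
  · filter_upwards with β E' _
    have h := (((hasDerivAt_id E').const_mul (-β)).exp).const_mul (f β)
    simp only [id] at h
    convert h using 1
    · rfl
    ring
end

section
/- Let f : ℝ → ℝ be nonnegative and measurable, and suppose β ↦ β^k f(β) exp(-β E') is integrable on [0,∞) for k = 0, 1, 2 and all E' in a neighborhood of E, with ρ(E) > 0. Then the conditional variance of the inverse temperature given energy E equals minus the derivative of the fundamental inverse temperature: ∫₀^∞ (β - β_F(E))² · (f(β) exp(-β E)/ρ(E)) dβ = -β_F'(E). -/
open MeasureTheory Real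

lemma hasDerivAt_momentAux (f : ℝ → ℝ) (hf_meas : Measurable f) (hf_nonneg : ∀ β, 0 ≤ f β)
    (k : ℕ) (E ε : ℝ) (hε : 0 < ε)
    (hI : ∀ E' ∈ Metric.ball E (2 * ε), ∀ j ≤ k + 1,
      IntegrableOn (fun β => β ^ j * f β * Real.exp (-β * E')) (Set.Ici (0 : ℝ))) :
    HasDerivAt (fun E' => ∫ β in Set.Ici (0 : ℝ), β ^ k * f β * Real.exp (-β * E'))
      (-∫ β in Set.Ici (0 : ℝ), β ^ (k + 1) * f β * Real.exp (-β * E)) E := by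
  have hmeas : ∀ x : ℝ, AEStronglyMeasurable (fun β => β ^ k * f β * Real.exp (-β * x))
      (volume.restrict (Set.Ici (0 : ℝ))) := by
    intro x
    exact (((measurable_id.pow_const k).mul hf_meas).mul
      ((measurable_id.neg.mul_const x).exp)).aestronglyMeasurable
  have hEball : E ∈ Metric.ball E (2 * ε) := Metric.mem_ball_self (by linarith)
  have hEε : E - ε ∈ Metric.ball E (2 * ε) := by
    have hd : dist (E - ε) E = ε := by
      rw [Real.dist_eq, show E - ε - E = -ε by ring, abs_neg, abs_of_pos hε]
    rw [Metric.mem_ball, hd]; linarith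
  have key := hasDerivAt_integral_of_dominated_loc_of_deriv_le (μ := volume.restrict (Set.Ici (0:ℝ)))
    (F := fun x β => β ^ k * f β * Real.exp (-β * x))
    (F' := fun x β => -(β ^ (k + 1) * f β * Real.exp (-β * x)))
    (bound := fun β => β ^ (k + 1) * f β * Real.exp (-β * (E - ε)))
    (Metric.ball_mem_nhds E hε) (Filter.Eventually.of_forall hmeas)
    (hI E hEball k (Nat.le_succ k))
    ?_ ?_ (hI (E - ε) hEε (k + 1) le_rfl) ?_
  · have := key.2
    rwa [integral_neg] at this
  · exact (((((measurable_id.pow_const (k+1)).mul hf_meas).mul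
      ((measurable_id.neg.mul_const E).exp)).neg).aestronglyMeasurable)
  · filter_upwards [ae_restrict_mem measurableSet_Ici] with β hβ
    intro x hx
    have hβ0 : (0:ℝ) ≤ β := hβ
    rw [norm_neg, Real.norm_eq_abs, abs_of_nonneg (mul_nonneg (mul_nonneg
      (pow_nonneg hβ0 _) (hf_nonneg β)) (Real.exp_pos _).le)]
    have hxE : E - ε ≤ x := by
      have := Metric.mem_ball.1 hx
      rw [Real.dist_eq] at this
      have := abs_lt.1 this
      linarith [this.1]
    have : Real.exp (-β * x) ≤ Real.exp (-β * (E - ε)) := by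
      apply Real.exp_le_exp.2
      nlinarith
    exact mul_le_mul_of_nonneg_left this (mul_nonneg (pow_nonneg hβ0 _) (hf_nonneg β))
  · filter_upwards [ae_restrict_mem measurableSet_Ici] with β hβ
    intro x hx
    have h : HasDerivAt (fun y => Real.exp (-β * y)) (Real.exp (-β * x) * (-β)) x := by
      simpa using ((hasDerivAt_id x).const_mul (-β)).exp
    have := h.const_mul (β ^ k * f β)
    convert this using 1
    · rfl
    ring


set_option maxHeartbeats 1000000 in
/-- The conditional variance of the inverse temperature given the energy `E`
equals minus the derivative of the fundamental inverse temperature: `-β_F'(E)`. -/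
theorem conditional_variance_beta_eq_neg_deriv_betaF
    (f : ℝ → ℝ) (hf_meas : Measurable f) (hf_nonneg : ∀ β, 0 ≤ f β) (E : ℝ)
    (hint : ∃ U ∈ nhds E, ∀ E' ∈ U, ∀ k ≤ 2,
      IntegrableOn (fun β => β ^ k * f β * Real.exp (-β * E')) (Set.Ici (0 : ℝ)))
    (hpos : 0 < rho f E) :
    ∫ β in Set.Ici (0 : ℝ), (β - betaF f E) ^ 2 * (f β * Real.exp (-β * E) / rho f E)
      = -deriv (betaF f) E := by
  obtain ⟨U, hU, hUint⟩ := hint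
  obtain ⟨ε, hε, hball⟩ := Metric.mem_nhds_iff.1 hU
  set δ := ε / 4 with hδ
  have δpos : 0 < δ := by positivity
  set M : ℕ → ℝ → ℝ := fun k E' => ∫ β in Set.Ici (0 : ℝ), β ^ k * f β * Real.exp (-β * E')
    with hM
  have hMrho : rho f = M 0 := by
    funext E'; simp [rho, hM]
  -- derivatives of the moments
  have hD : ∀ k : ℕ, k ≤ 1 → ∀ E' ∈ Metric.ball E δ, HasDerivAt (M k) (-(M (k + 1) E')) E' := by
    intro k hk E' hE'
    refine hasDerivAt_momentAux f hf_meas hf_nonneg k E' δ δpos ?_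
    intro E'' hE'' j hj
    refine hUint E'' (hball ?_) j (by omega)
    have h1 := Metric.mem_ball.1 hE''
    have h2 := Metric.mem_ball.1 hE'
    rw [Metric.mem_ball]
    calc dist E'' E ≤ dist E'' E' + dist E' E := dist_triangle _ _ _
      _ < 2 * δ + δ := by linarith
      _ ≤ ε := by rw [hδ]; linarith
  -- positivity of rho near E
  have hae : ∀ E' : ℝ, 0 ≤ᵐ[volume.restrict (Set.Ici (0 : ℝ))]
      fun β => f β * Real.exp (-β * E') :=
    fun E' => Filter.Eventually.of_forall fun β => mul_nonneg (hf_nonneg β) (Real.exp_pos _).le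
  have hint0 : ∀ E' ∈ U, IntegrableOn (fun β => f β * Real.exp (-β * E')) (Set.Ici (0 : ℝ)) := by
    intro E' h
    have := hUint E' h 0 (by norm_num)
    simpa using this
  have hsupp : ∀ E' : ℝ, Function.support (fun β => f β * Real.exp (-β * E'))
      = Function.support f := by
    intro E'; ext β
    simp [Function.mem_support, mul_ne_zero_iff, Real.exp_ne_zero]
  have hE_U : E ∈ U := mem_of_mem_nhds hU
  have hsupp_pos : 0 < (volume.restrict (Set.Ici (0 : ℝ))) (Function.support f) := by
    have := (integral_pos_iff_support_of_nonneg_ae (hae E) (hint0 E hE_U)).1 hpos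
    rwa [hsupp E] at this
  have hropos : ∀ E' ∈ U, 0 < rho f E' := by
    intro E' h
    refine (integral_pos_iff_support_of_nonneg_ae (hae E') (hint0 E' h)).2 ?_
    rwa [hsupp E']
  have hball_sub : Metric.ball E δ ⊆ U := fun x hx => hball (by
    have := Metric.mem_ball.1 hx
    rw [Metric.mem_ball]; linarith)
  -- betaF formula near E
  have hbetaF_eq : ∀ E' ∈ Metric.ball E δ, betaF f E' = M 1 E' / M 0 E' := by
    intro E' h
    have hpos' : 0 < rho f E' := hropos E' (hball_sub h)
    have hrd : HasDerivAt (rho f) (-(M 1 E')) E' := by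
      rw [hMrho]; exact hD 0 (by norm_num) E' h
    have hlog : HasDerivAt (fun x => Real.log (rho f x)) (-(M 1 E') / rho f E') E' :=
      hrd.log (ne_of_gt hpos')
    rw [betaF, hlog.deriv]
    rw [hMrho]
    ring
  have hEball : E ∈ Metric.ball E δ := Metric.mem_ball_self δpos
  have hM0pos : 0 < M 0 E := by rwa [hMrho] at hpos
  have hdiv : HasDerivAt (fun E' => M 1 E' / M 0 E')
      ((-(M 2 E) * M 0 E - M 1 E * -(M 1 E)) / (M 0 E) ^ 2) E :=
    (hD 1 le_rfl E hEball).div (hD 0 (by norm_num) E hEball) (ne_of_gt hM0pos)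
  have hEq : betaF f =ᶠ[nhds E] fun E' => M 1 E' / M 0 E' := by
    filter_upwards [Metric.ball_mem_nhds E δpos] with E' h using hbetaF_eq E' h
  have hderiv_betaF : deriv (betaF f) E
      = (-(M 2 E) * M 0 E - M 1 E * -(M 1 E)) / (M 0 E) ^ 2 := by
    rw [hEq.deriv_eq, hdiv.deriv]
  -- expand the variance integral
  set b := betaF f E with hb
  have hbval : b = M 1 E / M 0 E := hbetaF_eq E hEball
  have h0 := hUint E hE_U 0 (by norm_num)
  have h1 := hUint E hE_U 1 (by norm_num)
  have h2 := hUint E hE_U 2 le_rfl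
  have hexp : ∀ β : ℝ, (β - b) ^ 2 * (f β * Real.exp (-β * E) / rho f E)
      = (β ^ 2 * f β * Real.exp (-β * E) - 2 * b * (β ^ 1 * f β * Real.exp (-β * E))
          + b ^ 2 * (β ^ 0 * f β * Real.exp (-β * E))) / rho f E := by
    intro β; ring
  rw [show (∫ β in Set.Ici (0 : ℝ), (β - b) ^ 2 * (f β * Real.exp (-β * E) / rho f E))
      = ∫ β in Set.Ici (0 : ℝ), (β ^ 2 * f β * Real.exp (-β * E)
          - 2 * b * (β ^ 1 * f β * Real.exp (-β * E))
          + b ^ 2 * (β ^ 0 * f β * Real.exp (-β * E))) / rho f E from by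
    exact integral_congr_ae (Filter.Eventually.of_forall fun β => hexp β)]
  rw [integral_div]
  have hsum : (∫ β in Set.Ici (0 : ℝ), (β ^ 2 * f β * Real.exp (-β * E)
          - 2 * b * (β ^ 1 * f β * Real.exp (-β * E))
          + b ^ 2 * (β ^ 0 * f β * Real.exp (-β * E))))
      = M 2 E - 2 * b * M 1 E + b ^ 2 * M 0 E := by
    have e2 := integral_add (μ := volume.restrict (Set.Ici (0:ℝ)))
      (h2.sub (h1.const_mul (2 * b))) (h0.const_mul (b ^ 2))
    have e1 := integral_sub (μ := volume.restrict (Set.Ici (0:ℝ))) h2 (h1.const_mul (2 * b))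
    simp only [Pi.sub_apply] at e2
    rw [e2, e1, integral_const_mul, integral_const_mul]
  rw [hsum, hderiv_betaF, hMrho, hbval]
  have hne : M 0 E ≠ 0 := ne_of_gt hM0pos
  field_simp
  ring
end

section
/- Let f : ℝ → ℝ be nonnegative and measurable, and suppose β ↦ β^k f(β) exp(-β E') is integrable on [0,∞) for k = 0, 1, 2 and all E' in a neighborhood of E, with ρ(E) > 0. Then β_F'(E) ≤ 0; equivalently, log ρ has nonnegative second derivative at E, so the superstatistical ensemble function ρ is log-convex and its fundamental inverse temperature β_F is a decreasing function of the energy. -/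
open MeasureTheory Real

set_option maxHeartbeats 1000000 in
/-- The fundamental inverse temperature of a superstatistical ensemble is
decreasing: `β_F'(E) ≤ 0`; equivalently, `log ρ` has a nonnegative second derivative
at `E` (log-convexity of the ensemble function). -/
theorem deriv_betaF_nonpos
    (f : ℝ → ℝ) (hf_meas : Measurable f) (hf_nonneg : ∀ β, 0 ≤ f β) (E : ℝ)
    (hint : ∃ U ∈ nhds E, ∀ E' ∈ U, ∀ k ≤ 2,
      IntegrableOn (fun β => β ^ k * f β * Real.exp (-β * E')) (Set.Ici (0 : ℝ)))
    (hpos : 0 < rho f E) :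
    deriv (betaF f) E ≤ 0 ∧
    0 ≤ iteratedDeriv 2 (fun E' => Real.log (rho f E')) E := by
  obtain ⟨U, hU, hUint⟩ := hint
  obtain ⟨ε, hε, hball⟩ := Metric.mem_nhds_iff.mp hU
  set G : ℕ → ℝ → ℝ := fun k x => ∫ β in Set.Ici (0:ℝ), β ^ k * f β * Real.exp (-β * x)
    with hG
  have hrhoG : rho f = G 0 := by
    funext x
    simp only [rho, hG, pow_zero, one_mul]
  have hInt : ∀ x ∈ Metric.ball E ε, ∀ k, k ≤ 2 →
      IntegrableOn (fun β => β ^ k * f β * Real.exp (-β * x)) (Set.Ici (0:ℝ)) :=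
    fun x hx k hk => hUint x (hball hx) k hk
  have hmeas : ∀ (k : ℕ) (x : ℝ),
      AEStronglyMeasurable (fun β : ℝ => β ^ k * f β * Real.exp (-β * x))
        (volume.restrict (Set.Ici (0:ℝ))) := by
    intro k x
    exact (((measurable_id.pow_const k).mul hf_meas).mul
      (Real.measurable_exp.comp (measurable_id.neg.mul_const x))).aestronglyMeasurable
  -- differentiation under the integral sign
  have hderiv : ∀ k, k ≤ 1 → ∀ x ∈ Metric.ball E ε, HasDerivAt (G k) (-(G (k+1) x)) x := by
    intro k hk x hx
    have hxE : dist x E < ε := Metric.mem_ball.mp hx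
    set δ : ℝ := (ε - dist x E) / 2 with hδ
    have hδpos : 0 < δ := by
      have := dist_nonneg (x := x) (y := E)
      simp only [hδ]; linarith
    have hxδ : x - δ ∈ Metric.ball E ε := by
      rw [Metric.mem_ball, Real.dist_eq]
      have h1 : |x - δ - E| ≤ |x - E| + |δ| := by
        have := abs_sub_abs_le_abs_sub (x - E) δ
        calc |x - δ - E| = |(x - E) - δ| := by ring_nf
          _ ≤ |x - E| + |δ| := abs_sub _ _
      rw [abs_of_pos hδpos] at h1
      rw [Real.dist_eq] at hxE
      simp only [hδ] at h1 ⊢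
      rw [Real.dist_eq] at h1 ⊢
      linarith
    have key := hasDerivAt_integral_of_dominated_loc_of_deriv_le
      (μ := volume.restrict (Set.Ici (0:ℝ))) (x₀ := x)
      (F := fun y β => β ^ k * f β * Real.exp (-β * y))
      (F' := fun y β => -(β ^ (k+1) * f β * Real.exp (-β * y)))
      (bound := fun β => β ^ (k+1) * f β * Real.exp (-β * (x - δ)))
      (Metric.ball_mem_nhds x hδpos)
      (Filter.Eventually.of_forall fun y => hmeas k y)
      (hInt x hx k (by omega))
      ((hmeas (k+1) x).neg)
      ?_ (hInt (x - δ) hxδ (k+1) (by omega)) ?_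
    · have : (∫ β in Set.Ici (0:ℝ), -(β ^ (k+1) * f β * Real.exp (-β * x)))
          = -(G (k+1) x) := by
        rw [integral_neg]
      rw [this] at key
      exact key.2
    · filter_upwards [ae_restrict_mem measurableSet_Ici] with β hβ y hy
      have hβ0 : (0:ℝ) ≤ β := hβ
      have hyx : x - δ ≤ y := by
        have := Metric.mem_ball.mp hy
        rw [Real.dist_eq] at this
        have := abs_lt.mp this
        linarith [this.1]
      have hexp : Real.exp (-β * y) ≤ Real.exp (-β * (x - δ)) := by
        apply Real.exp_le_exp.mpr
        nlinarith
      rw [norm_neg, Real.norm_of_nonneg (by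
        exact mul_nonneg (mul_nonneg (pow_nonneg hβ0 _) (hf_nonneg β)) (Real.exp_pos _).le)]
      exact mul_le_mul_of_nonneg_left hexp
        (mul_nonneg (pow_nonneg hβ0 _) (hf_nonneg β))
    · filter_upwards with β y _
      have h1 : HasDerivAt (fun y : ℝ => -β * y) (-β) y := by
        simpa using (hasDerivAt_id y).const_mul (-β)
      have h2 := h1.exp
      have h3 := h2.const_mul (β ^ k * f β)
      convert h3 using 1
      · rfl
      ring
  have hE0 : E ∈ Metric.ball E ε := Metric.mem_ball_self hε
  have hG0E : 0 < G 0 E := by rw [← hrhoG]; exact hpos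
  have hposev : ∀ᶠ x in nhds E, 0 < G 0 x :=
    (hderiv 0 (by omega) E hE0).continuousAt.eventually (eventually_gt_nhds hG0E)
  -- betaF agrees with G1/G0 near E
  have key : betaF f =ᶠ[nhds E] fun x => G 1 x / G 0 x := by
    filter_upwards [hposev, Metric.ball_mem_nhds E hε] with x hx0 hxball
    have hd : HasDerivAt (G 0) (-(G 1 x)) x := hderiv 0 (by omega) x hxball
    have hlog : HasDerivAt (fun y => Real.log (rho f y)) (-(G 1 x) / G 0 x) x := by
      rw [hrhoG]
      exact hd.log (ne_of_gt hx0)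
    simp only [betaF, hlog.deriv, neg_div, neg_neg]
  -- Cauchy–Schwarz via the discriminant
  have hquad : ∀ t : ℝ, 0 ≤ G 2 E * (t * t) + (2 * G 1 E) * t + G 0 E := by
    intro t
    have hfun : (fun β : ℝ => (t * β + 1)^2 * (f β * Real.exp (-β * E)))
        = fun β : ℝ => (t * t) * (β ^ 2 * f β * Real.exp (-β * E))
          + ((2 * t) * (β ^ 1 * f β * Real.exp (-β * E))
            + β ^ 0 * f β * Real.exp (-β * E)) := by
      funext β; ring
    have h2 := hInt E hE0 2 (by omega)
    have h1 := hInt E hE0 1 (by omega)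
    have h0 := hInt E hE0 0 (by omega)
    have hval : (∫ β in Set.Ici (0:ℝ), (t * β + 1)^2 * (f β * Real.exp (-β * E)))
        = G 2 E * (t * t) + (2 * G 1 E) * t + G 0 E := by
      have hA : Integrable (fun β : ℝ => t * t * (β ^ 2 * f β * Real.exp (-β * E)))
          (volume.restrict (Set.Ici 0)) := h2.const_mul _
      have hB : Integrable (fun β : ℝ => 2 * t * (β ^ 1 * f β * Real.exp (-β * E)))
          (volume.restrict (Set.Ici 0)) := h1.const_mul _
      have hBC : Integrable (fun β : ℝ => 2 * t * (β ^ 1 * f β * Real.exp (-β * E))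
          + β ^ 0 * f β * Real.exp (-β * E)) (volume.restrict (Set.Ici 0)) := hB.add h0
      have s1 : (∫ β in Set.Ici (0:ℝ), (t * t * (β ^ 2 * f β * Real.exp (-β * E))
            + (2 * t * (β ^ 1 * f β * Real.exp (-β * E)) + β ^ 0 * f β * Real.exp (-β * E))))
          = (∫ β in Set.Ici (0:ℝ), t * t * (β ^ 2 * f β * Real.exp (-β * E)))
            + ∫ β in Set.Ici (0:ℝ), (2 * t * (β ^ 1 * f β * Real.exp (-β * E))
              + β ^ 0 * f β * Real.exp (-β * E)) :=
        integral_add hA hBC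
      have s2 : (∫ β in Set.Ici (0:ℝ), (2 * t * (β ^ 1 * f β * Real.exp (-β * E))
            + β ^ 0 * f β * Real.exp (-β * E)))
          = (∫ β in Set.Ici (0:ℝ), 2 * t * (β ^ 1 * f β * Real.exp (-β * E)))
            + ∫ β in Set.Ici (0:ℝ), β ^ 0 * f β * Real.exp (-β * E) :=
        integral_add hB h0
      have s3 : (∫ β in Set.Ici (0:ℝ), t * t * (β ^ 2 * f β * Real.exp (-β * E)))
          = t * t * G 2 E := by
        simp only [hG]; exact integral_const_mul _ _
      have s4 : (∫ β in Set.Ici (0:ℝ), 2 * t * (β ^ 1 * f β * Real.exp (-β * E)))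
          = 2 * t * G 1 E := by
        simp only [hG]; exact integral_const_mul _ _
      rw [hfun, s1, s2, s3, s4]
      simp only [hG]
      ring
    rw [← hval]
    apply setIntegral_nonneg measurableSet_Ici
    intro β _
    exact mul_nonneg (sq_nonneg _) (mul_nonneg (hf_nonneg β) (Real.exp_pos _).le)
  have hCS : G 1 E * G 1 E ≤ G 2 E * G 0 E := by
    have h := discrim_le_zero hquad
    rw [discrim] at h
    nlinarith
  -- compute deriv betaF E
  have h1d : HasDerivAt (G 1) (-(G 2 E)) E := hderiv 1 (by omega) E hE0
  have h0d : HasDerivAt (G 0) (-(G 1 E)) E := hderiv 0 (by omega) E hE0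
  have hq := h1d.div h0d (ne_of_gt hG0E)
  have hderivBetaF : deriv (betaF f) E
      = (-(G 2 E) * G 0 E - G 1 E * -(G 1 E)) / (G 0 E)^2 := by
    rw [key.deriv_eq]
    exact hq.deriv
  have hfirst : deriv (betaF f) E ≤ 0 := by
    rw [hderivBetaF]
    apply div_nonpos_of_nonpos_of_nonneg
    · nlinarith
    · positivity
  refine ⟨hfirst, ?_⟩
  have hlogderiv : deriv (fun E' => Real.log (rho f E')) = fun x => -(betaF f x) := by
    funext x
    simp [betaF]
  rw [show (2:ℕ) = 1 + 1 from rfl, iteratedDeriv_succ, iteratedDeriv_one, hlogderiv]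
  rw [deriv.fun_neg]
  linarith
end

section
/- Let ρ : ℝ → ℝ be positive and continuously differentiable, set β_F(E) = -(d/dE) log ρ(E), and suppose β_F is differentiable and satisfies β_F'(E) = A(β_F(E)) for all E, where A : ℝ → ℝ is a Lipschitz continuous function. If E₁, E₂ ∈ ℝ satisfy β_F(E₁) = β_F(E₂), then for every t ∈ ℝ one has β_F(E₁ + t) = β_F(E₂ + t) and ρ(E₁ + t)/ρ(E₁) = ρ(E₂ + t)/ρ(E₂); that is, the ratio function R(t; E) = ρ(E+t)/ρ(E) depends on E only through the value β_F(E). -/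
open Real

/-- Let `ρ` be positive and continuously differentiable, let
`β_F(E) = -(d/dE) log ρ(E)`, and suppose `β_F` is differentiable and satisfies the
autonomous ODE `β_F' = A(β_F)` with `A` Lipschitz. If `β_F(E₁) = β_F(E₂)`, then for
every `t` one has `β_F(E₁+t) = β_F(E₂+t)` and `ρ(E₁+t)/ρ(E₁) = ρ(E₂+t)/ρ(E₂)`; i.e.
the ratio function `R(t; E) = ρ(E+t)/ρ(E)` depends on `E` only through `β_F(E)`. -/
theorem ratio_function_depends_only_on_betaF
    (ρ : ℝ → ℝ) (hpos : ∀ E, 0 < ρ E) (hC1 : ContDiff ℝ 1 ρ)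
    (A : ℝ → ℝ) (K : NNReal) (hA : LipschitzWith K A)
    (hdiff : Differentiable ℝ (fun E => -deriv (fun x => Real.log (ρ x)) E))
    (hode : ∀ E : ℝ, deriv (fun E' => -deriv (fun x => Real.log (ρ x)) E') E
      = A (-deriv (fun x => Real.log (ρ x)) E))
    (E₁ E₂ : ℝ)
    (heq : -deriv (fun x => Real.log (ρ x)) E₁ = -deriv (fun x => Real.log (ρ x)) E₂) :
    ∀ t : ℝ,
      -deriv (fun x => Real.log (ρ x)) (E₁ + t)
        = -deriv (fun x => Real.log (ρ x)) (E₂ + t) ∧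
      ρ (E₁ + t) / ρ E₁ = ρ (E₂ + t) / ρ E₂ := by
  set β : ℝ → ℝ := fun E => -deriv (fun x => Real.log (ρ x)) E with hβ
  -- β satisfies HasDerivAt β (A (β E)) E
  have hβderiv : ∀ E : ℝ, HasDerivAt β (A (β E)) E := by
    intro E
    have := (hdiff E).hasDerivAt
    rwa [hode E] at this
  have key : ∀ E₁ E₂ : ℝ, β E₁ = β E₂ → ∀ t : ℝ, β (E₁ + t) = β (E₂ + t) := by
    intro E₁ E₂ heq t
    set f : ℝ → ℝ := fun s => β (E₁ + s) with hf
    set g : ℝ → ℝ := fun s => β (E₂ + s) with hg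
    have hf' : ∀ s : ℝ, HasDerivAt f (A (f s)) s := by
      intro s
      have h1 : HasDerivAt (fun s : ℝ => E₁ + s) 1 s := by
        simpa using (hasDerivAt_id s).const_add E₁
      have := (hβderiv (E₁ + s)).comp s h1
      rw [mul_one] at this
      exact this
    have hg' : ∀ s : ℝ, HasDerivAt g (A (g s)) s := by
      intro s
      have h1 : HasDerivAt (fun s : ℝ => E₂ + s) 1 s := by
        simpa using (hasDerivAt_id s).const_add E₂
      have := (hβderiv (E₂ + s)).comp s h1
      rw [mul_one] at this
      exact this
    have h0 : f 0 = g 0 := by simp [hf, hg, heq]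
    have ht : t ∈ Set.Icc (-(|t| + 1)) (|t| + 1) := by
      constructor <;> [linarith [neg_abs_le t]; linarith [le_abs_self t]]
    have h0' : (0 : ℝ) ∈ Set.Ioo (-(|t| + 1)) (|t| + 1) := by
      constructor <;> [nlinarith [abs_nonneg t]; nlinarith [abs_nonneg t]]
    have := ODE_solution_unique_of_mem_Icc (v := fun _ x => A x)
      (s := fun _ => Set.univ) (K := K)
      (fun _ _ => hA.lipschitzOnWith) h0'
      (fun s _ => (hf' s).continuousAt.continuousWithinAt)
      (fun s _ => hf' s) (fun _ _ => trivial)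
      (fun s _ => (hg' s).continuousAt.continuousWithinAt)
      (fun s _ => hg' s) (fun _ _ => trivial) h0
    exact this ht
  intro t
  have hbeq : β (E₁ + t) = β (E₂ + t) := key E₁ E₂ heq t
  refine ⟨hbeq, ?_⟩
  -- Second part: the log-difference is constant
  have hlogd : ∀ E : ℝ, HasDerivAt (fun x => Real.log (ρ x))
      (deriv (fun x => Real.log (ρ x)) E) E := by
    intro E
    exact ((hC1.differentiable one_ne_zero E).log (hpos E).ne').hasDerivAt
  set h : ℝ → ℝ := fun s => Real.log (ρ (E₁ + s)) - Real.log (ρ (E₂ + s)) with hh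
  have hderiv : ∀ s : ℝ, HasDerivAt h 0 s := by
    intro s
    have h1 : HasDerivAt (fun s : ℝ => Real.log (ρ (E₁ + s)))
        (deriv (fun x => Real.log (ρ x)) (E₁ + s)) s := by
      have := (hlogd (E₁ + s)).comp s (by simpa using (hasDerivAt_id s).const_add E₁)
      rw [mul_one] at this
      exact this
    have h2 : HasDerivAt (fun s : ℝ => Real.log (ρ (E₂ + s)))
        (deriv (fun x => Real.log (ρ x)) (E₂ + s)) s := by
      have := (hlogd (E₂ + s)).comp s (by simpa using (hasDerivAt_id s).const_add E₂)
      rw [mul_one] at this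
      exact this
    have hb : β (E₁ + s) = β (E₂ + s) := key E₁ E₂ heq s
    have : deriv (fun x => Real.log (ρ x)) (E₁ + s)
        = deriv (fun x => Real.log (ρ x)) (E₂ + s) := by
      have := hb
      simp only [hβ, neg_inj] at this
      exact this
    have := h1.sub h2
    rw [hh]
    refine this.congr_deriv ?_
    rw [‹deriv (fun x => Real.log (ρ x)) (E₁ + s)
        = deriv (fun x => Real.log (ρ x)) (E₂ + s)›]
    ring
  have hconst : h t = h 0 :=
    is_const_of_deriv_eq_zero (fun s => (hderiv s).differentiableAt)
      (fun s => (hderiv s).deriv) t 0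
  have hc : Real.log (ρ (E₁ + t)) - Real.log (ρ (E₂ + t))
      = Real.log (ρ E₁) - Real.log (ρ E₂) := by
    simpa [hh] using hconst
  have hlog : Real.log (ρ (E₁ + t)) - Real.log (ρ E₁)
      = Real.log (ρ (E₂ + t)) - Real.log (ρ E₂) := by linarith
  have := congrArg Real.exp hlog
  rw [Real.exp_sub, Real.exp_sub, Real.exp_log (hpos _), Real.exp_log (hpos _),
    Real.exp_log (hpos _), Real.exp_log (hpos _)] at this
  exact this
end

section
/- Let q > 1, β₀ > 0, set c = 1/(q-1), let E > -1/((q-1) β₀), and let β' = β₀/(1 + (q-1) β₀ E). Then for every β > 0, the conditional density of inverse temperature given energy in the q-canonical ensemble, namely f(β) exp(-β E)/ρ(E) with f(β) = (1/(β₀ (q-1) Γ(c))) exp(-β/(β₀ (q-1))) (β/(β₀ (q-1)))^{c-1} and ρ(E) = (1 + (q-1) β₀ E)^{1/(1-q)}, equals the gamma density (1/(β' (q-1) Γ(c))) exp(-β/(β' (q-1))) (β/(β' (q-1)))^{c-1}; in particular it depends on E only through β' = β_F(E). -/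
open Real

/-- In the q-canonical ensemble, the conditional density of the inverse
temperature given the energy, `f(β)exp(-βE)/ρ(E)` with gamma weight `f` and
`ρ(E) = (1+(q-1)β₀E)^(1/(1-q))`, equals the gamma density with shape `c = 1/(q-1)` and
scale `β'(q-1)`, where `β' = β₀/(1+(q-1)β₀E)`; in particular it depends on `E` only
through `β' = β_F(E)`. -/
theorem qcanonical_conditional_density
    (q β₀ : ℝ) (hq : 1 < q) (hβ₀ : 0 < β₀)
    (c : ℝ) (hc : c = 1 / (q - 1))
    (E : ℝ) (hE : -1 / ((q - 1) * β₀) < E)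
    (β' : ℝ) (hβ' : β' = β₀ / (1 + (q - 1) * β₀ * E))
    (β : ℝ) (hβ : 0 < β) :
    (1 / (β₀ * (q - 1) * Real.Gamma c)) * Real.exp (-β / (β₀ * (q - 1))) *
        (β / (β₀ * (q - 1))) ^ (c - 1) * Real.exp (-β * E) /
        ((1 + (q - 1) * β₀ * E) ^ ((1 : ℝ) / (1 - q)))
      = (1 / (β' * (q - 1) * Real.Gamma c)) * Real.exp (-β / (β' * (q - 1))) *
        (β / (β' * (q - 1))) ^ (c - 1) := by
  have hq1 : (0:ℝ) < q - 1 := by linarith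
  have hDB : 0 < (q - 1) * β₀ := mul_pos hq1 hβ₀
  have hA : 0 < 1 + (q - 1) * β₀ * E := by
    have h := (div_lt_iff₀ hDB).mp hE
    nlinarith
  have hD : 0 < β₀ * (q - 1) := mul_pos hβ₀ hq1
  have hcpos : 0 < c := by rw [hc]; positivity
  have hΓ : 0 < Real.Gamma c := Real.Gamma_pos_of_pos hcpos
  have hc' : (1:ℝ) / (1 - q) = -c := by
    rw [hc]; field_simp
    rw [div_eq_iff (sub_ne_zero.mpr (ne_of_lt hq) : (1:ℝ) - q ≠ 0)]; ring
  have hβ'val : β' * (q - 1) = β₀ * (q - 1) / (1 + (q - 1) * β₀ * E) := by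
    rw [hβ']; ring
  have hexp : Real.exp (-β / (β' * (q - 1)))
      = Real.exp (-β / (β₀ * (q - 1))) * Real.exp (-β * E) := by
    rw [← Real.exp_add, hβ'val]
    congr 1
    field_simp
    ring
  have hpow : (β / (β' * (q - 1))) ^ (c - 1)
      = (β / (β₀ * (q - 1))) ^ (c - 1) * (1 + (q - 1) * β₀ * E) ^ (c - 1) := by
    rw [hβ'val, show β / (β₀ * (q - 1) / (1 + (q - 1) * β₀ * E))
        = (β / (β₀ * (q - 1))) * (1 + (q - 1) * β₀ * E) from by field_simp]
    exact Real.mul_rpow (by positivity) hA.le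
  have hApow : (1 + (q - 1) * β₀ * E) ^ ((1:ℝ) / (1 - q))
      = ((1 + (q - 1) * β₀ * E) ^ (c - 1) * (1 + (q - 1) * β₀ * E))⁻¹ := by
    rw [hc', Real.rpow_neg hA.le, ← Real.rpow_add_one hA.ne']
    norm_num
  have hAc : (0:ℝ) < (1 + (q - 1) * β₀ * E) ^ (c - 1) := Real.rpow_pos_of_pos hA _
  rw [hexp, hpow, hApow, hβ'val]
  field_simp
end

section
/- Let q > 1, β₀ > 0, α > -1, set c = 1/(q-1), and assume c > α + 1. Then for every β > 0, ∫₀^{β₀} [(1/(β' (q-1) Γ(c))) exp(-β/(β' (q-1))) (β/(β' (q-1)))^{c-1}] · [(1/(β₀ B(α+1, c-α-1))) (β₀/β')^{2-c} (β₀/β' - 1)^α] dβ' = (1/(β₀ (q-1) Γ(c-α-1))) exp(-β/(β₀ (q-1))) (β/(β₀ (q-1)))^{c-α-2}; that is, the marginal distribution of the superstatistical inverse temperature β is a gamma distribution with shape c - α - 1 and scale β₀ (q-1). -/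
open MeasureTheory Real

/-- The real Beta function `B(a,b) = Γ(a)Γ(b)/Γ(a+b)`. -/
noncomputable def betaFun (a b : ℝ) : ℝ :=
  Real.Gamma a * Real.Gamma b / Real.Gamma (a + b)

/-- Marginalizing the gamma conditional density `P(β|β',q)` against the
density `P(β'|q,β₀)` of the fundamental inverse temperature over `β' ∈ (0, β₀)` yields
a gamma distribution for `β` with shape `c-α-1` and scale `β₀(q-1)`. -/
theorem qcanonical_marginal_beta_distribution
    (q β₀ α : ℝ) (hq : 1 < q) (hβ₀ : 0 < β₀) (hα : -1 < α)
    (c : ℝ) (hc : c = 1 / (q - 1)) (hcα : α + 1 < c)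
    (β : ℝ) (hβ : 0 < β) :
    ∫ β' in Set.Ioo (0 : ℝ) β₀,
        ((1 / (β' * (q - 1) * Real.Gamma c)) * Real.exp (-β / (β' * (q - 1))) *
          (β / (β' * (q - 1))) ^ (c - 1)) *
        ((1 / (β₀ * betaFun (α + 1) (c - α - 1))) * (β₀ / β') ^ (2 - c) *
          (β₀ / β' - 1) ^ α)
      = (1 / (β₀ * (q - 1) * Real.Gamma (c - α - 1))) *
          Real.exp (-β / (β₀ * (q - 1))) * (β / (β₀ * (q - 1))) ^ (c - α - 2) := by
  have hk : 0 < q - 1 := sub_pos.mpr hq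
  set k := q - 1 with hkdef
  have hα1 : (0:ℝ) < α + 1 := by linarith
  have hcα2 : (0:ℝ) < c - α - 1 := by linarith
  have hc0 : 0 < c := by linarith
  have hΓ1 : 0 < Real.Gamma (α + 1) := Real.Gamma_pos_of_pos hα1
  have hΓ2 : 0 < Real.Gamma (c - α - 1) := Real.Gamma_pos_of_pos hcα2
  have hΓc : 0 < Real.Gamma c := Real.Gamma_pos_of_pos hc0
  have hb5 : 0 < β / (β₀ * k) := by positivity
  set g : ℝ → ℝ := fun s => β / k * (s⁻¹ - β₀⁻¹) with hgdef
  set g' : ℝ → ℝ := fun s => β / k * (-(s ^ 2)⁻¹) with hg'def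
  set C : ℝ := ((1 / (β₀ * k * Real.Gamma (c - α - 1))) *
      Real.exp (-β / (β₀ * k)) * (β / (β₀ * k)) ^ (c - α - 2)) / Real.Gamma (α + 1) with hCdef
  -- the image of the substitution
  have himg : g '' Set.Ioo 0 β₀ = Set.Ioi 0 := by
    ext t
    constructor
    · rintro ⟨s, ⟨hs0, hsβ⟩, rfl⟩
      have h1 : β₀⁻¹ < s⁻¹ := by
        rw [inv_lt_inv₀ hβ₀ hs0]; exact hsβ
      have h2 : 0 < s⁻¹ - β₀⁻¹ := sub_pos.mpr h1
      simp only [hgdef, Set.mem_Ioi]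
      positivity
    · intro ht
      have ht0 : (0:ℝ) < t := ht
      have hd : t * k * β₀ + β > 0 := by positivity
      refine ⟨β * β₀ / (t * k * β₀ + β), ⟨by positivity, ?_⟩, ?_⟩
      · rw [div_lt_iff₀ hd]
        nlinarith [mul_pos (mul_pos ht0 hk) (mul_pos hβ₀ hβ₀)]
      · simp only [hgdef]
        field_simp
        ring
  -- derivative of the substitution
  have hderiv : ∀ s ∈ Set.Ioo (0:ℝ) β₀, HasDerivWithinAt g (g' s) (Set.Ioo 0 β₀) s := by
    intro s hs
    have hs0 : s ≠ 0 := ne_of_gt hs.1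
    have h : HasDerivAt g (β / k * (-(s ^ 2)⁻¹)) s := by
      have h1 : HasDerivAt (fun x : ℝ => x⁻¹ - β₀⁻¹) (-(s ^ 2)⁻¹) s :=
        (hasDerivAt_inv hs0).sub_const _
      simpa [hgdef] using h1.const_mul (β / k)
    exact h.hasDerivWithinAt
  -- injectivity
  have hinj : Set.InjOn g (Set.Ioo 0 β₀) := by
    intro a _ b _ hab
    have hβk : β / k ≠ 0 := by positivity
    have h1 : a⁻¹ - β₀⁻¹ = b⁻¹ - β₀⁻¹ := mul_left_cancel₀ hβk hab
    have h2 : a⁻¹ = b⁻¹ := by linarith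
    exact inv_injective h2
  -- change of variables
  have htrans : ∫ t in Set.Ioi (0:ℝ), C * (Real.exp (-t) * t ^ α)
      = ∫ s in Set.Ioo (0:ℝ) β₀, |g' s| • (C * (Real.exp (-(g s)) * (g s) ^ α)) := by
    rw [← himg]
    exact integral_image_eq_integral_abs_deriv_smul measurableSet_Ioo hderiv hinj _
  -- pointwise identity of integrands
  have hpt : Set.EqOn
      (fun β' => ((1 / (β' * k * Real.Gamma c)) * Real.exp (-β / (β' * k)) *
          (β / (β' * k)) ^ (c - 1)) *
        ((1 / (β₀ * betaFun (α + 1) (c - α - 1))) * (β₀ / β') ^ (2 - c) *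
          (β₀ / β' - 1) ^ α))
      (fun s => |g' s| • (C * (Real.exp (-(g s)) * (g s) ^ α)))
      (Set.Ioo (0:ℝ) β₀) := by
    intro s hs
    obtain ⟨hs0, hsβ⟩ := hs
    have hsn : s ≠ 0 := ne_of_gt hs0
    have hb2p : (0:ℝ) < β₀ / s := by positivity
    have hb2 : (1:ℝ) < β₀ / s := (one_lt_div hs0).mpr hsβ
    have hb3 : (0:ℝ) < β₀ / s - 1 := sub_pos.mpr hb2
    -- key algebraic identities
    have e1 : β / (s * k) = (β / (β₀ * k)) * (β₀ / s) := by field_simp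
    have e2 : g s = (β / (β₀ * k)) * (β₀ / s - 1) := by
      simp only [hgdef]
      have h1 : β / k * s⁻¹ = β / (β₀ * k) * (β₀ / s) := by
        field_simp
      have h2 : β / k * β₀⁻¹ = β / (β₀ * k) := by
        rw [← div_eq_mul_inv, div_div, mul_comm k β₀]
      rw [mul_sub, mul_sub, h1, h2, mul_one]
    have e3 : -(g s) = -(β / (s * k)) + β / (β₀ * k) := by
      simp only [hgdef]; field_simp; ring
    have habs : |g' s| = β / k * (s ^ 2)⁻¹ := by
      simp only [hg'def, mul_neg, abs_neg]
      rw [abs_of_pos (by positivity)]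
    -- rpow decompositions
    have r1 : (β / (s * k)) ^ (c - 1)
        = (β / (β₀ * k)) ^ (c - 1) * (β₀ / s) ^ (c - 1) := by
      rw [e1, Real.mul_rpow hb5.le hb2p.le]
    have r2 : (g s) ^ α = (β / (β₀ * k)) ^ α * (β₀ / s - 1) ^ α := by
      rw [e2, Real.mul_rpow hb5.le hb3.le]
    have r4 : (β / (β₀ * k)) ^ (c - 1)
        = (β / (β₀ * k)) ^ (c - α - 2) * ((β / (β₀ * k)) ^ α * (β / (β₀ * k))) := by
      rw [show c - 1 = (c - α - 2) + (α + 1) by ring, Real.rpow_add hb5,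
        Real.rpow_add hb5 α 1, Real.rpow_one]
    have r3 : (β₀ / s) ^ (2 - c) = (β₀ / s) * ((β₀ / s) ^ (c - 1))⁻¹ := by
      rw [show (2 - c) = 1 + -(c - 1) by ring, Real.rpow_add hb2p, Real.rpow_one,
        Real.rpow_neg hb2p.le]
    have eexp : Real.exp (-(g s)) = Real.exp (-(β / (s * k))) * Real.exp (β / (β₀ * k)) := by
      rw [e3, Real.exp_add]
    have hrexp : Real.exp (β / (β₀ * k)) = (Real.exp (-(β / (β₀ * k))))⁻¹ := by
      rw [Real.exp_neg, inv_inv]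
    have hbeta : betaFun (α + 1) (c - α - 1)
        = Real.Gamma (α + 1) * Real.Gamma (c - α - 1) / Real.Gamma c := by
      unfold betaFun; rw [show α + 1 + (c - α - 1) = c by ring]
    -- combine
    simp only [smul_eq_mul, habs, hCdef, hbeta, neg_div]
    rw [r1, r4, r2, r3, eexp, hrexp]
    have hne1 : ((β₀ / s) ^ (c - 1)) ≠ 0 := (Real.rpow_pos_of_pos hb2p _).ne'
    have hne2 : Real.exp (-(β / (β₀ * k))) ≠ 0 := Real.exp_ne_zero _
    field_simp
  calc ∫ β' in Set.Ioo (0 : ℝ) β₀,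
        ((1 / (β' * k * Real.Gamma c)) * Real.exp (-β / (β' * k)) *
          (β / (β' * k)) ^ (c - 1)) *
        ((1 / (β₀ * betaFun (α + 1) (c - α - 1))) * (β₀ / β') ^ (2 - c) *
          (β₀ / β' - 1) ^ α)
      = ∫ s in Set.Ioo (0:ℝ) β₀, |g' s| • (C * (Real.exp (-(g s)) * (g s) ^ α)) :=
        setIntegral_congr_fun measurableSet_Ioo hpt
    _ = ∫ t in Set.Ioi (0:ℝ), C * (Real.exp (-t) * t ^ α) := htrans.symm
    _ = C * ∫ t in Set.Ioi (0:ℝ), Real.exp (-t) * t ^ α := integral_const_mul C _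
    _ = C * Real.Gamma (α + 1) := by
        rw [Real.Gamma_eq_integral hα1, show α + 1 - 1 = α by ring]
    _ = (1 / (β₀ * k * Real.Gamma (c - α - 1))) *
          Real.exp (-β / (β₀ * k)) * (β / (β₀ * k)) ^ (c - α - 2) := by
        rw [hCdef]; field_simp
end

section
/- Let f : ℝ → ℝ be nonnegative and measurable, and suppose β ↦ β^k f(β) exp(-β E') is integrable on [0,∞) for k = 0, 1, 2 and all E' in a neighborhood of E, with ρ(E) > 0 and β_F(E) ≠ 0. Then the conditional second moment of the reduced inverse temperature z = β/β_F(E) satisfies ∫₀^∞ (β/β_F(E))² · (f(β) exp(-β E)/ρ(E)) dβ = 1 - β_F'(E)/β_F(E)², and in particular this quantity is at least 1; hence the generalized entropic index Q = ⟨(β/β_F)²⟩ satisfies Q ≥ 1 for any superstatistical model. -/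
open MeasureTheory Real

noncomputable def MM (f : ℝ → ℝ) (k : ℕ) (x : ℝ) : ℝ :=
  ∫ β in Set.Ici (0 : ℝ), β ^ k * f β * Real.exp (-β * x)

lemma MM_hasDerivAt (f : ℝ → ℝ) (hf_meas : Measurable f) (hf_nonneg : ∀ β, 0 ≤ f β) (E δ : ℝ) (hδ : 0 < δ)
    (hint : ∀ E' ∈ Metric.closedBall E δ, ∀ k ≤ 2,
      IntegrableOn (fun β => β ^ k * f β * Real.exp (-β * E')) (Set.Ici (0 : ℝ)))
    (k : ℕ) (hk : k ≤ 1) (x₀ : ℝ) (hx₀ : x₀ ∈ Metric.ball E δ) :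
    HasDerivAt (MM f k) (-(MM f (k + 1) x₀)) x₀ := by
  have hεpos : 0 < δ - dist x₀ E := by
    have := Metric.mem_ball.mp hx₀; linarith
  have hball : Metric.ball x₀ (δ - dist x₀ E) ⊆ Metric.ball E δ := by
    intro x hx
    have hx' := Metric.mem_ball.mp hx
    have : dist x E ≤ dist x x₀ + dist x₀ E := dist_triangle x x₀ E
    exact Metric.mem_ball.mpr (by linarith)
  have hmemU : ∀ x ∈ Metric.ball E δ, x ∈ Metric.closedBall E δ :=
    fun x hx => Metric.ball_subset_closedBall hx
  have hlow : E - δ ∈ Metric.closedBall E δ := by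
    simp only [Metric.mem_closedBall, Real.dist_eq]
    rw [show E - δ - E = -δ by ring, abs_neg, abs_of_pos hδ]
  have hmeas : ∀ (j : ℕ) (x : ℝ),
      AEStronglyMeasurable (fun β : ℝ => β ^ j * f β * Real.exp (-β * x))
        (volume.restrict (Set.Ici (0 : ℝ))) := by
    intro j x
    exact (((measurable_id.pow_const j).mul hf_meas).mul
      ((measurable_id.neg.mul_const x).exp)).aestronglyMeasurable
  have key := hasDerivAt_integral_of_dominated_loc_of_deriv_le
    (F := fun x β => β ^ k * f β * Real.exp (-β * x))
    (F' := fun x β => -(β ^ (k + 1) * f β * Real.exp (-β * x)))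
    (bound := fun β => β ^ (k + 1) * f β * Real.exp (-β * (E - δ)))
    (μ := volume.restrict (Set.Ici (0 : ℝ))) (Metric.ball_mem_nhds x₀ hεpos)
    (Filter.Eventually.of_forall fun x => hmeas k x)
    (hint x₀ (hmemU x₀ hx₀) k (hk.trans one_le_two))
    ((hmeas (k + 1) x₀).neg)
    ?_
    (hint (E - δ) hlow (k + 1) (by omega))
    ?_
  · exact key.2.congr_deriv (by simp [MM, integral_neg])
  · -- bound
    filter_upwards [ae_restrict_mem measurableSet_Ici] with β hβ
    intro x hx
    have hxE : x ∈ Metric.ball E δ := hball hx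
    have hxlow : E - δ ≤ x := by
      have := Metric.mem_ball.mp hxE
      rw [Real.dist_eq] at this
      cases abs_lt.mp this with
      | intro h1 h2 => linarith
    have hβ0 : (0:ℝ) ≤ β := hβ
    have hnn : (0:ℝ) ≤ β ^ (k+1) * f β := mul_nonneg (pow_nonneg hβ0 _) (hf_nonneg β)
    have hexp : Real.exp (-β * x) ≤ Real.exp (-β * (E - δ)) := by
      apply Real.exp_le_exp.mpr
      nlinarith
    rw [norm_neg, Real.norm_eq_abs, abs_of_nonneg (by positivity)]
    exact mul_le_mul_of_nonneg_left hexp hnn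
  · -- differentiability
    filter_upwards with β
    intro x hx
    have h1 : HasDerivAt (fun x : ℝ => -β * x) (-β) x := by
      simpa using (hasDerivAt_id x).const_mul (-β)
    have h2 := (h1.exp).const_mul (β ^ k * f β)
    refine h2.congr_deriv ?_
    rw [pow_succ]; ring

/-- The conditional second moment of the reduced inverse temperature
`z = β/β_F(E)` equals `1 - β_F'(E)/β_F(E)²`, and in particular it is at least 1; hence
the generalized entropic index `Q = ⟨(β/β_F)²⟩` satisfies `Q ≥ 1` for any
superstatistical model. -/
theorem conditional_second_moment_reduced_inverse_temperature
    (f : ℝ → ℝ) (hf_meas : Measurable f) (hf_nonneg : ∀ β, 0 ≤ f β) (E : ℝ)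
    (hint : ∃ U ∈ nhds E, ∀ E' ∈ U, ∀ k ≤ 2,
      IntegrableOn (fun β => β ^ k * f β * Real.exp (-β * E')) (Set.Ici (0 : ℝ)))
    (hpos : 0 < rho f E) (hbF : betaF f E ≠ 0) :
    (∫ β in Set.Ici (0 : ℝ),
        (β / betaF f E) ^ 2 * (f β * Real.exp (-β * E) / rho f E)
      = 1 - deriv (betaF f) E / (betaF f E) ^ 2) ∧
    1 ≤ ∫ β in Set.Ici (0 : ℝ),
        (β / betaF f E) ^ 2 * (f β * Real.exp (-β * E) / rho f E) := by
  obtain ⟨U, hU, hUint⟩ := hint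
  obtain ⟨δ, hδpos, hδU⟩ := Metric.nhds_basis_closedBall.mem_iff.mp hU
  have hint' : ∀ E' ∈ Metric.closedBall E δ, ∀ k ≤ 2,
      IntegrableOn (fun β => β ^ k * f β * Real.exp (-β * E')) (Set.Ici (0 : ℝ)) :=
    fun E' hE' k hk => hUint E' (hδU hE') k hk
  have hrho : rho f = MM f 0 := by
    funext x; simp only [rho, MM, pow_zero, one_mul]
  -- derivative of rho near E
  have hρderiv : ∀ x ∈ Metric.ball E δ, HasDerivAt (rho f) (-(MM f 1 x)) x := by
    intro x hx
    rw [hrho]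
    exact MM_hasDerivAt f hf_meas hf_nonneg E δ hδpos hint' 0 (by norm_num) x hx
  have hρderivE := hρderiv E (Metric.mem_ball_self hδpos)
  have hM1deriv : HasDerivAt (MM f 1) (-(MM f 2 E)) E :=
    MM_hasDerivAt f hf_meas hf_nonneg E δ hδpos hint' 1 le_rfl E (Metric.mem_ball_self hδpos)
  -- rho positive near E
  have hcont : ContinuousAt (rho f) E := hρderivE.continuousAt
  have hposev : ∀ᶠ x in nhds E, 0 < rho f x :=
    hcont (IsOpen.mem_nhds isOpen_Ioi hpos)
  have hballev : ∀ᶠ x in nhds E, x ∈ Metric.ball E δ := Metric.ball_mem_nhds E hδpos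
  -- betaF equals M1/rho near E
  have hbeq : betaF f =ᶠ[nhds E] fun x => MM f 1 x / rho f x := by
    filter_upwards [hposev, hballev] with x hx1 hx2
    have hlog : HasDerivAt (fun E' => Real.log (rho f E')) (-(MM f 1 x) / rho f x) x :=
      (hρderiv x hx2).log hx1.ne'
    simp only [betaF, hlog.deriv, neg_div, neg_neg]
  have hbE : betaF f E = MM f 1 E / rho f E := hbeq.self_of_nhds
  have hρne : rho f E ≠ 0 := hpos.ne'
  have hM1ne : MM f 1 E ≠ 0 := by
    intro h
    apply hbF
    rw [hbE, h, zero_div]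
  -- derivative of betaF at E
  have hquot : HasDerivAt (fun x => MM f 1 x / rho f x)
      ((-(MM f 2 E) * rho f E - MM f 1 E * (-(MM f 1 E))) / rho f E ^ 2) E :=
    hM1deriv.div hρderivE hρne
  have hDeriv : deriv (betaF f) E
      = (-(MM f 2 E) * rho f E - MM f 1 E * (-(MM f 1 E))) / rho f E ^ 2 := by
    rw [hbeq.deriv_eq, hquot.deriv]
  -- compute LHS
  set b := betaF f E with hb
  set r := rho f E with hr
  set m1 := MM f 1 E with hm1
  set m2 := MM f 2 E with hm2
  have hbne : b ≠ 0 := hbF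
  have hLHS : (∫ β in Set.Ici (0 : ℝ),
      (β / b) ^ 2 * (f β * Real.exp (-β * E) / r)) = (b ^ 2 * r)⁻¹ * m2 := by
    have heq : ∀ β : ℝ, (β / b) ^ 2 * (f β * Real.exp (-β * E) / r)
        = (b ^ 2 * r)⁻¹ * (β ^ 2 * f β * Real.exp (-β * E)) := by
      intro β; field_simp
    simp only [heq]
    rw [integral_const_mul]
    rfl
  -- Cauchy-Schwarz style inequality: m1^2 ≤ m2 * r
  have hi2 := hint' E (Metric.mem_closedBall_self hδpos.le) 2 le_rfl
  have hi1 := hint' E (Metric.mem_closedBall_self hδpos.le) 1 (by norm_num)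
  have hi0 := hint' E (Metric.mem_closedBall_self hδpos.le) 0 (by norm_num)
  have hCS : m1 ^ 2 ≤ m2 * r := by
    set t := m1 / r with ht
    have hnn : 0 ≤ ∫ β in Set.Ici (0 : ℝ), (β - t) ^ 2 * (f β * Real.exp (-β * E)) := by
      apply integral_nonneg
      intro β
      exact mul_nonneg (sq_nonneg _) (mul_nonneg (hf_nonneg β) (Real.exp_nonneg _))
    have hexpand : (∫ β in Set.Ici (0 : ℝ), (β - t) ^ 2 * (f β * Real.exp (-β * E)))
        = m2 + ((-2 * t) * m1 + t ^ 2 * r) := by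
      have heq : ∀ β : ℝ, (β - t) ^ 2 * (f β * Real.exp (-β * E))
          = β ^ 2 * f β * Real.exp (-β * E)
            + ((-2 * t) * (β ^ 1 * f β * Real.exp (-β * E))
              + t ^ 2 * (β ^ 0 * f β * Real.exp (-β * E))) := by
        intro β; ring
      simp only [heq]
      have h1' : Integrable (fun β : ℝ => -2 * t * (β ^ 1 * f β * Real.exp (-β * E)))
          (volume.restrict (Set.Ici (0 : ℝ))) := hi1.const_mul _
      have h0' : Integrable (fun β : ℝ => t ^ 2 * (β ^ 0 * f β * Real.exp (-β * E)))
          (volume.restrict (Set.Ici (0 : ℝ))) := hi0.const_mul _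
      have hadd1 : Integrable (fun β : ℝ => -2 * t * (β ^ 1 * f β * Real.exp (-β * E))
          + t ^ 2 * (β ^ 0 * f β * Real.exp (-β * E)))
          (volume.restrict (Set.Ici (0 : ℝ))) := h1'.add h0'
      rw [integral_add hi2 hadd1, integral_add h1' h0', integral_const_mul, integral_const_mul,
        hr, hrho]
      rfl
    rw [hexpand] at hnn
    have htr : t * r = m1 := by rw [ht]; exact div_mul_cancel₀ m1 hρne
    nlinarith [mul_nonneg hpos.le hnn, sq_nonneg (t * r - m1)]
  constructor
  · rw [hLHS, hDeriv, hbE]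
    field_simp
    ring
  · rw [hLHS, hbE]
    have hcalc : (((m1 / r) ^ 2) * r)⁻¹ * m2 = m2 * r / m1 ^ 2 := by
      field_simp
    rw [hcalc]
    exact (one_le_div (by positivity)).mpr hCS
end

section
/- The function q ↦ (q-1) Γ(1/(q-1)) exp((1/(q-1)) (1 + (q-2) ψ(1/(q-1)))), where Γ is the Gamma function and ψ = (ln Γ)' is the digamma function, is integrable on the interval (1, ∞); that is, the entropic prior P(q|∅) ∝ exp(S_z(q)) on q ≥ 1 is normalizable. -/
open MeasureTheory Real

/-- The digamma function `ψ = (ln Γ)'`. -/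
noncomputable def digamma (x : ℝ) : ℝ :=
  deriv (fun y => Real.log (Real.Gamma y)) x

section aux

open Set Filter Topology

lemma diffAt_logGamma {x : ℝ} (hx : 0 < x) :
    DifferentiableAt ℝ (fun y => Real.log (Real.Gamma y)) x := by
  refine (Real.differentiableAt_Gamma ?_).log (Real.Gamma_ne_zero ?_) <;>
    exact fun m => ne_of_gt (lt_of_le_of_lt (neg_nonpos.mpr (Nat.cast_nonneg m)) hx)

lemma hasDerivAt_logGamma {x : ℝ} (hx : 0 < x) :
    HasDerivAt (fun y => Real.log (Real.Gamma y)) (digamma x) x :=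
  (diffAt_logGamma hx).hasDerivAt

lemma logGamma_rec {x : ℝ} (hx : 0 < x) :
    Real.log (Real.Gamma (x + 1)) = Real.log (Real.Gamma x) + Real.log x := by
  rw [Real.Gamma_add_one hx.ne', Real.log_mul hx.ne' (Real.Gamma_pos_of_pos hx).ne', add_comm]

lemma digamma_add_one {x : ℝ} (hx : 0 < x) :
    digamma (x + 1) = digamma x + 1 / x := by
  show deriv (fun y => Real.log (Real.Gamma y)) (x + 1)
      = deriv (fun y => Real.log (Real.Gamma y)) x + 1 / x
  rw [← deriv_comp_add_const, one_div, ← Real.deriv_log,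
    ← deriv_add (diffAt_logGamma hx) (Real.differentiableAt_log hx.ne')]
  apply Filter.EventuallyEq.deriv_eq
  filter_upwards [eventually_gt_nhds hx] with y hy
  exact logGamma_rec hy

lemma digamma_le_log {x : ℝ} (hx : 0 < x) : digamma x ≤ Real.log x := by
  have h := Real.convexOn_log_Gamma.deriv_le_slope (Set.mem_Ioi.mpr hx)
    (Set.mem_Ioi.mpr (show (0:ℝ) < x + 1 by linarith)) (by linarith) (diffAt_logGamma hx)
  have key : slope (Real.log ∘ Real.Gamma) x (x + 1) = Real.log x := by
    rw [slope_def_field]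
    simp only [Function.comp_apply]
    rw [logGamma_rec hx, show x + 1 - x = (1:ℝ) by ring, div_one]
    ring
  rw [key] at h
  exact h

lemma log_le_digamma_add_one {x : ℝ} (hx : 0 < x) : Real.log x ≤ digamma (x + 1) := by
  have h := Real.convexOn_log_Gamma.slope_le_deriv (Set.mem_Ioi.mpr hx)
    (Set.mem_Ioi.mpr (show (0:ℝ) < x + 1 by linarith)) (by linarith)
    (diffAt_logGamma (show (0:ℝ) < x + 1 by linarith))
  have key : slope (Real.log ∘ Real.Gamma) x (x + 1) = Real.log x := by
    rw [slope_def_field]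
    simp only [Function.comp_apply]
    rw [logGamma_rec hx, show x + 1 - x = (1:ℝ) by ring, div_one]
    ring
  rw [key] at h
  exact h

lemma digamma_lower {x : ℝ} (hx : 0 < x) : Real.log x - 1 / x ≤ digamma x := by
  have h := log_le_digamma_add_one hx
  rw [digamma_add_one hx] at h
  linarith

lemma digamma_upper {x : ℝ} (hx : 0 < x) : digamma x ≤ Real.log (x + 1) - 1 / x := by
  have h := digamma_le_log (show (0:ℝ) < x + 1 by linarith)
  rw [digamma_add_one hx] at h
  linarith

lemma Gamma_le_one {x : ℝ} (h1 : 1 ≤ x) (h2 : x ≤ 2) : Real.Gamma x ≤ 1 := by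
  have h := Real.convexOn_log_Gamma.2 (Set.mem_Ioi.mpr one_pos)
    (Set.mem_Ioi.mpr two_pos) (show (0:ℝ) ≤ 2 - x by linarith)
    (show (0:ℝ) ≤ x - 1 by linarith) (by ring)
  simp only [smul_eq_mul, Function.comp_apply, Real.Gamma_one, Real.Gamma_two, Real.log_one,
    mul_zero, add_zero] at h
  rw [show (2 - x) * 1 + (x - 1) * 2 = x by ring] at h
  calc Real.Gamma x = Real.exp (Real.log (Real.Gamma x)) :=
        (Real.exp_log (Real.Gamma_pos_of_pos (by linarith))).symm
    _ ≤ Real.exp 0 := Real.exp_le_exp.mpr (by linarith)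
    _ = 1 := Real.exp_zero

lemma hasDerivAt_g {s : ℝ} (hs : 0 < s) :
    HasDerivAt (fun u : ℝ => u * Real.log u - u + 1 - Real.log (Real.Gamma u))
      (Real.log s - digamma s) s := by
  have h1 : HasDerivAt (fun u : ℝ => u * Real.log u) (Real.log s + 1) s := by
    have := (hasDerivAt_id s).mul (Real.hasDerivAt_log hs.ne')
    refine this.congr_deriv ?_
    simp [hs.ne']
  have h2 := hasDerivAt_logGamma hs
  have := ((h1.sub (hasDerivAt_id s)).add_const 1).sub h2
  refine this.congr_deriv ?_
  ring

lemma logGamma_le_stirling {t : ℝ} (ht : 1 ≤ t) :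
    Real.log (Real.Gamma t) ≤ t * Real.log t - t + 1 := by
  set g : ℝ → ℝ := fun u => u * Real.log u - u + 1 - Real.log (Real.Gamma u) with hg
  have hmono : MonotoneOn g (Set.Ici 1) := by
    apply monotoneOn_of_deriv_nonneg (convex_Ici 1)
    · intro s hs
      exact (hasDerivAt_g (lt_of_lt_of_le one_pos hs)).continuousAt.continuousWithinAt
    · intro s hs
      rw [interior_Ici] at hs
      exact (hasDerivAt_g (lt_trans one_pos hs)).differentiableAt.differentiableWithinAt
    · intro s hs
      rw [interior_Ici] at hs
      rw [(hasDerivAt_g (lt_trans one_pos hs)).deriv]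
      have := digamma_le_log (lt_trans one_pos hs)
      linarith
  have h := hmono (Set.self_mem_Ici) (Set.mem_Ici.mpr ht) ht
  have hg1 : g 1 = 0 := by simp [hg, Real.Gamma_one]
  rw [hg1] at h
  simp only [hg] at h
  linarith

lemma boundA {t : ℝ} (ht : 1 ≤ t) :
    1 / t * Real.Gamma t * Real.exp (t + (1 - t) * digamma t) ≤ Real.exp 2 := by
  have ht0 : 0 < t := lt_of_lt_of_le one_pos ht
  have htt : t * (1 / t) = 1 := by field_simp
  have hψ : Real.log t - 1 / t ≤ digamma t := digamma_lower ht0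
  have hΓ : Real.log (Real.Gamma t) ≤ t * Real.log t - t + 1 := logGamma_le_stirling ht
  have h3 : (1 - t) * digamma t ≤ Real.log t - 1 / t - t * Real.log t + 1 := by
    calc (1 - t) * digamma t ≤ (1 - t) * (Real.log t - 1 / t) :=
          mul_le_mul_of_nonpos_left hψ (by linarith)
      _ = Real.log t - 1 / t - t * Real.log t + t * (1 / t) := by ring
      _ = Real.log t - 1 / t - t * Real.log t + 1 := by rw [htt]
  have hexp : -Real.log t + Real.log (Real.Gamma t) + (t + (1 - t) * digamma t) ≤ 2 - 1 / t := by
    linarith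
  have h1t : (0:ℝ) < 1 / t := by positivity
  have hΓ0 : 0 < Real.Gamma t := Real.Gamma_pos_of_pos ht0
  calc 1 / t * Real.Gamma t * Real.exp (t + (1 - t) * digamma t)
      = Real.exp (-Real.log t) * Real.exp (Real.log (Real.Gamma t)) *
          Real.exp (t + (1 - t) * digamma t) := by
        rw [Real.exp_neg, Real.exp_log ht0, Real.exp_log hΓ0, one_div]
    _ = Real.exp (-Real.log t + Real.log (Real.Gamma t) + (t + (1 - t) * digamma t)) := by
        rw [← Real.exp_add, ← Real.exp_add]
    _ ≤ Real.exp (2 - 1 / t) := Real.exp_le_exp.mpr hexp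
    _ ≤ Real.exp 2 := Real.exp_le_exp.mpr (by linarith)

lemma boundB {t : ℝ} (h0 : 0 < t) (h1 : t ≤ 1) :
    1 / t * Real.Gamma t * Real.exp (t + (1 - t) * digamma t)
      ≤ (1 / t) ^ 2 * Real.exp (2 + Real.log 2 - 1 / t) := by
  have htt : t * (1 / t) = 1 := by field_simp
  have h1t : (0:ℝ) < 1 / t := by positivity
  have hΓ : Real.Gamma t ≤ 1 / t := by
    have h := Gamma_le_one (show (1:ℝ) ≤ t + 1 by linarith) (by linarith)
    rw [Real.Gamma_add_one h0.ne'] at h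
    rw [le_div_iff₀ h0]
    calc Real.Gamma t * t = t * Real.Gamma t := mul_comm _ _
      _ ≤ 1 := h
  have hψ : digamma t ≤ Real.log 2 - 1 / t := by
    have h := digamma_upper h0
    have hlog : Real.log (t + 1) ≤ Real.log 2 := Real.log_le_log (by linarith) (by linarith)
    linarith
  have hexp : t + (1 - t) * digamma t ≤ 2 + Real.log 2 - 1 / t := by
    have h3 : (1 - t) * digamma t ≤ (1 - t) * (Real.log 2 - 1 / t) :=
      mul_le_mul_of_nonneg_left hψ (by linarith)
    have h4 : (1 - t) * (Real.log 2 - 1 / t) = Real.log 2 - 1 / t - t * Real.log 2 + t * (1 / t) := by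
      ring
    rw [htt] at h4
    have h5 : 0 ≤ t * Real.log 2 := by positivity
    linarith [h3, h4.le, h4.ge]
  have hΓ0 : 0 < Real.Gamma t := Real.Gamma_pos_of_pos h0
  calc 1 / t * Real.Gamma t * Real.exp (t + (1 - t) * digamma t)
      ≤ 1 / t * (1 / t) * Real.exp (2 + Real.log 2 - 1 / t) := by
        apply mul_le_mul (mul_le_mul_of_nonneg_left hΓ h1t.le)
          (Real.exp_le_exp.mpr hexp) (Real.exp_pos _).le (by positivity)
    _ = (1 / t) ^ 2 * Real.exp (2 + Real.log 2 - 1 / t) := by ring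

end aux

/-- The entropic prior
`q ↦ (q-1) Γ(1/(q-1)) exp((1/(q-1))(1 + (q-2) ψ(1/(q-1))))` is integrable on `(1, ∞)`;
that is, the entropic prior `P(q|∅) ∝ exp(S_z(q))` on `q ≥ 1` is normalizable. -/
theorem entropic_prior_normalizable :
    IntegrableOn
      (fun q : ℝ => (q - 1) * Real.Gamma (1 / (q - 1)) *
        Real.exp ((1 / (q - 1)) * (1 + (q - 2) * digamma (1 / (q - 1)))))
      (Set.Ioi (1 : ℝ)) := by
  set F : ℝ → ℝ := fun q => (q - 1) * Real.Gamma (1 / (q - 1)) *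
    Real.exp ((1 / (q - 1)) * (1 + (q - 2) * digamma (1 / (q - 1)))) with hF
  -- measurability
  have hGcont : ContinuousOn (fun q : ℝ => (q - 1) * Real.Gamma (1 / (q - 1))) (Set.Ioi 1) := by
    intro q hq
    have hq1 : (0:ℝ) < q - 1 := sub_pos.mpr hq
    have h1 : ContinuousAt (fun q : ℝ => 1 / (q - 1)) q :=
      continuousAt_const.div (continuousAt_id.sub continuousAt_const) hq1.ne'
    have h2 : ContinuousAt Real.Gamma (1 / (q - 1)) := by
      refine (Real.differentiableAt_Gamma ?_).continuousAt
      intro m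
      refine ne_of_gt (lt_of_le_of_lt (neg_nonpos.mpr (Nat.cast_nonneg m)) ?_)
      positivity
    have h3 : ContinuousAt (fun q : ℝ => Real.Gamma (1 / (q - 1))) q :=
      ContinuousAt.comp (g := Real.Gamma) h2 h1
    exact ((continuousAt_id.sub continuousAt_const).mul h3).continuousWithinAt
  have ht_meas : Measurable (fun q : ℝ => 1 / (q - 1)) :=
    measurable_const.div (measurable_id.sub measurable_const)
  have hdg : Measurable digamma := measurable_deriv _
  have hmeasExp : Measurable (fun q : ℝ =>
      Real.exp ((1 / (q - 1)) * (1 + (q - 2) * digamma (1 / (q - 1))))) := by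
    exact Real.measurable_exp.comp (ht_meas.mul (measurable_const.add
      ((measurable_id.sub measurable_const).mul (hdg.comp ht_meas))))
  have haem : AEStronglyMeasurable F (volume.restrict (Set.Ioi 1)) :=
    (hGcont.aestronglyMeasurable measurableSet_Ioi).mul hmeasExp.aestronglyMeasurable
  have hFnonneg : ∀ q : ℝ, 1 < q → 0 ≤ F q := by
    intro q hq
    have hq1 : (0:ℝ) < q - 1 := sub_pos.mpr hq
    have := Real.Gamma_pos_of_pos (show (0:ℝ) < 1 / (q - 1) by positivity)
    positivity
  -- key rewriting : F q in terms of t = 1/(q-1)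
  rw [← Set.Ioc_union_Ioi_eq_Ioi (show (1:ℝ) ≤ 2 by norm_num)]
  apply MeasureTheory.IntegrableOn.union
  · -- on (1, 2]
    apply Integrable.mono' (g := fun _ : ℝ => Real.exp 2)
      ((integrableOn_const measure_Ioc_lt_top.ne))
      (haem.mono_measure (Measure.restrict_mono Set.Ioc_subset_Ioi_self le_rfl))
    rw [ae_restrict_iff' measurableSet_Ioc]
    refine Filter.Eventually.of_forall fun q hq => ?_
    have hq1 : (0:ℝ) < q - 1 := sub_pos.mpr hq.1
    have ht1 : (1:ℝ) ≤ 1 / (q - 1) := one_le_one_div hq1 (by linarith [hq.2])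
    have hA := boundA ht1
    rw [one_div_one_div] at hA
    have hexp_eq : (1 / (q - 1)) * (1 + (q - 2) * digamma (1 / (q - 1)))
        = 1 / (q - 1) + (1 - 1 / (q - 1)) * digamma (1 / (q - 1)) := by
      have hkey : 1 - 1 / (q - 1) = (1 / (q - 1)) * (q - 2) := by
        field_simp
        ring
      rw [hkey]; ring
    rw [Real.norm_eq_abs, abs_of_nonneg (hFnonneg q hq.1)]
    calc F q = (q - 1) * Real.Gamma (1 / (q - 1)) *
          Real.exp (1 / (q - 1) + (1 - 1 / (q - 1)) * digamma (1 / (q - 1))) := by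
            simp only [hF]; rw [hexp_eq]
      _ ≤ Real.exp 2 := hA
  · -- on (2, ∞)
    apply Integrable.mono' (g := fun q : ℝ => 32 * Real.exp 3 * Real.exp (-(1/2) * q))
      ((exp_neg_integrableOn_Ioi 2 (by norm_num : (0:ℝ) < 1/2)).const_mul _)
      (haem.mono_measure (Measure.restrict_mono (Set.Ioi_subset_Ioi (by norm_num)) le_rfl))
    rw [ae_restrict_iff' measurableSet_Ioi]
    refine Filter.Eventually.of_forall fun q hq => ?_
    rw [Set.mem_Ioi] at hq
    have hq1 : (0:ℝ) < q - 1 := by linarith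
    have h0t : (0:ℝ) < 1 / (q - 1) := by positivity
    have h1t : 1 / (q - 1) ≤ 1 := by
      rw [div_le_one hq1]; linarith
    have hB := boundB h0t h1t
    rw [one_div_one_div] at hB
    have hexp_eq : (1 / (q - 1)) * (1 + (q - 2) * digamma (1 / (q - 1)))
        = 1 / (q - 1) + (1 - 1 / (q - 1)) * digamma (1 / (q - 1)) := by
      have hkey : 1 - 1 / (q - 1) = (1 / (q - 1)) * (q - 2) := by
        field_simp
        ring
      rw [hkey]; ring
    rw [Real.norm_eq_abs, abs_of_nonneg (hFnonneg q (by linarith))]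
    have hstep1 : F q ≤ (q - 1) ^ 2 * Real.exp (2 + Real.log 2 - (q - 1)) := by
      calc F q = (q - 1) * Real.Gamma (1 / (q - 1)) *
            Real.exp (1 / (q - 1) + (1 - 1 / (q - 1)) * digamma (1 / (q - 1))) := by
              simp only [hF]; rw [hexp_eq]
        _ ≤ (q - 1) ^ 2 * Real.exp (2 + Real.log 2 - (q - 1)) := hB
    have hA : Real.exp (2 + Real.log 2 - (q - 1)) = 2 * Real.exp 3 * Real.exp (-q) := by
      rw [show 2 + Real.log 2 - (q - 1) = Real.log 2 + (3 + -q) by ring, Real.exp_add,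
        Real.exp_log two_pos, Real.exp_add]
      ring
    have hB2 : (q - 1) ^ 2 ≤ 16 * Real.exp (q / 2) := by
      have h4 : (q - 1) / 4 ≤ Real.exp ((q - 1) / 4) := by
        linarith [Real.add_one_le_exp ((q - 1) / 4)]
      have h0 : (0:ℝ) ≤ (q - 1) / 4 := by linarith
      have hsq : ((q - 1) / 4) ^ 2 ≤ Real.exp ((q - 1) / 4) ^ 2 := by
        exact pow_le_pow_left₀ h0 h4 2
      have hsq2 : Real.exp ((q - 1) / 4) ^ 2 = Real.exp ((q - 1) / 2) := by
        rw [sq, ← Real.exp_add]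
        ring_nf
      have hq2 : Real.exp ((q - 1) / 2) ≤ Real.exp (q / 2) :=
        Real.exp_le_exp.mpr (by linarith)
      nlinarith [hsq, hsq2, hq2]
    calc F q ≤ (q - 1) ^ 2 * Real.exp (2 + Real.log 2 - (q - 1)) := hstep1
      _ = (q - 1) ^ 2 * (2 * Real.exp 3 * Real.exp (-q)) := by rw [hA]
      _ ≤ (16 * Real.exp (q / 2)) * (2 * Real.exp 3 * Real.exp (-q)) := by
          apply mul_le_mul_of_nonneg_right hB2 (by positivity)
      _ = 32 * Real.exp 3 * (Real.exp (q / 2) * Real.exp (-q)) := by ring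
      _ = 32 * Real.exp 3 * Real.exp (-(1/2) * q) := by
          rw [← Real.exp_add]
          congr 1
          ring
end
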